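/- A single strip swap reduces the number of reversals of a permutation by at most 2; that is, if π' is obtained from π by one strip swap, then rev(π') ≥ rev(π) − 2. -/

import Mathlib

/-- A run: each element is the successor of the previous one. -/
def IsRun (l : List ℕ) : Prop := l.Chain' (fun a b => b = a + 1)

/-- `noLink x y`: the optional value `y` does not continue the optional value `x` by +1. -/
def noLink (x y : Option ℕ) : Prop := ∀ a ∈ x, ∀ b ∈ y, b ≠ a + 1

/-- Number of "breaks" between consecutive entries (places where the successor chain stops). -/
def breaks (l : List ℕ) : ℕ := (l.zip l.tail).countP (fun p => decide (p.2 ≠ p.1 + 1))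

/-- Number of strips (maximal runs of consecutive increasing values). -/
def numStrips (l : List ℕ) : ℕ := if l = [] then 0 else 1 + breaks l

/-- Number of reversals (descents): adjacent pairs with the left entry larger. -/
def revCount (l : List ℕ) : ℕ := (l.zip l.tail).countP (fun p => decide (p.2 < p.1))

/-- `π'` is obtained from `π` by swapping two (disjoint) strips of `π`. -/
def StripSwap (π π' : List ℕ) : Prop :=
  ∃ A X B Y C : List ℕ,
    π = A ++ X ++ B ++ Y ++ C ∧
    π' = A ++ Y ++ B ++ X ++ C ∧
    X ≠ [] ∧ Y ≠ [] ∧ IsRun X ∧ IsRun Y ∧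
    noLink A.getLast? X.head? ∧ noLink X.getLast? (B ++ Y ++ C).head? ∧
    noLink (A ++ X ++ B).getLast? Y.head? ∧ noLink Y.getLast? C.head?

/-- `π'` is obtained from `π` by removing one strip and reinserting it at another position. -/
def BlockMove (π π' : List ℕ) : Prop :=
  ∃ A X B A' B' : List ℕ,
    π = A ++ X ++ B ∧
    X ≠ [] ∧ IsRun X ∧
    noLink A.getLast? X.head? ∧ noLink X.getLast? B.head? ∧
    A' ++ B' = A ++ B ∧ A' ≠ A ∧
    π' = A' ++ X ++ B'

/-- `StepsTo R k a b`: `b` is reachable from `a` in exactly `k` steps of the relation `R`. -/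
def StepsTo (R : List ℕ → List ℕ → Prop) : ℕ → List ℕ → List ℕ → Prop
  | 0 => fun a b => a = b
  | k + 1 => fun a b => ∃ c, R a c ∧ StepsTo R k c b

/-- The identity permutation of `{1,…,n}` in one-line notation. -/
def idPerm (n : ℕ) : List ℕ := List.range' 1 n

/-- Strip swap distance to the identity permutation of `{1,…,n}`. -/
noncomputable def SSD (n : ℕ) (π : List ℕ) : ℕ :=
  sInf {m | StepsTo StripSwap m π (idPerm n)}

/-- Block sorting distance to the identity permutation of `{1,…,n}`. -/
noncomputable def BS (n : ℕ) (π : List ℕ) : ℕ :=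
  sInf {m | StepsTo BlockMove m π (idPerm n)}


/-- Descent indicator between an optional last element and optional head element. -/
def Dd : Option ℕ → Option ℕ → ℕ
  | some u, some v => if v < u then 1 else 0
  | _, _ => 0

lemma Dd_none_left (y : Option ℕ) : Dd none y = 0 := by cases y <;> rfl
lemma Dd_none_right (x : Option ℕ) : Dd x none = 0 := by cases x <;> rfl

lemma revCount_nil : revCount [] = 0 := rfl

lemma revCount_cons (a : ℕ) (t : List ℕ) :
    revCount (a :: t) = Dd (some a) t.head? + revCount t := by
  cases t with
  | nil => rfl
  | cons b t' =>
    simp only [revCount, List.tail_cons, List.zip_cons_cons, List.countP_cons, List.head?_cons, Dd]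
    split_ifs <;> simp_all <;> omega

lemma revCount_append (l m : List ℕ) :
    revCount (l ++ m) = revCount l + revCount m + Dd l.getLast? m.head? := by
  induction l with
  | nil => simp [revCount_nil, Dd_none_left]
  | cons a l ih =>
    rw [List.cons_append, revCount_cons, ih, revCount_cons]
    cases l with
    | nil => simp [Dd_none_left, Dd_none_right]; cases m <;> simp [Dd_none_right] <;> omega
    | cons b l' =>
      simp only [List.cons_append, List.head?_cons, List.getLast?_cons_cons]
      omega

lemma run_head_le_getLast : ∀ (l : List ℕ), IsRun l →
    ∀ h ∈ l.head?, ∀ g ∈ l.getLast?, h ≤ g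
  | [], _, _, hh, _, _ => by simp at hh
  | [a], _, h, hh, g, hg => by
      simp at hh hg; omega
  | a :: b :: t, hr, h, hh, g, hg => by
      have hr' : IsRun (b :: t) ∧ b = a + 1 := by
        rw [IsRun, List.Chain', List.isChain_cons_cons] at hr
        exact ⟨hr.2, hr.1⟩
      have := run_head_le_getLast (b :: t) hr'.1 b (by simp) g
        (by rwa [List.getLast?_cons_cons] at hg)
      simp at hh
      omega

theorem test : True := trivial

lemma core1 (a? c? : Option ℕ) (x1 xk b1 bm y1 yl : ℕ)
    (hx : x1 ≤ xk) (hy : y1 ≤ yl)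
    (h1 : ∀ a ∈ a?, a ≠ y1) (h2 : yl ≠ b1) (h3 : bm ≠ x1) (h4 : ∀ c ∈ c?, xk ≠ c) :
    Dd a? (some x1) + Dd (some xk) (some b1) + Dd (some bm) (some y1) + Dd (some yl) c?
      ≤ Dd a? (some y1) + Dd (some yl) (some b1) + Dd (some bm) (some x1) + Dd (some xk) c? + 2 := by
  cases a? <;> cases c? <;> simp [Dd, Option.mem_def] at * <;> split_ifs <;> omega

lemma core2 (a? c? : Option ℕ) (x1 xk y1 yl : ℕ)
    (hx : x1 ≤ xk) (hy : y1 ≤ yl)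
    (h1 : ∀ a ∈ a?, a ≠ y1) (h2 : yl ≠ x1) (h4 : ∀ c ∈ c?, xk ≠ c) :
    Dd a? (some x1) + Dd (some xk) (some y1) + Dd (some yl) c?
      ≤ Dd a? (some y1) + Dd (some yl) (some x1) + Dd (some xk) c? + 2 := by
  cases a? <;> cases c? <;> simp [Dd, Option.mem_def] at * <;> split_ifs <;> omega

lemma ne_of_nodup_append {l₁ l₂ : List ℕ} (h : (l₁ ++ l₂).Nodup) {a b : ℕ}
    (ha : a ∈ l₁) (hb : b ∈ l₂) : a ≠ b :=
  fun e => (List.disjoint_of_nodup_append h) ha (e ▸ hb)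

lemma mem_of_getLast? {l : List ℕ} {a : ℕ} (h : l.getLast? = some a) : a ∈ l := by
  obtain ⟨hne, rfl⟩ := List.mem_getLast?_eq_getLast h
  exact List.getLast_mem hne


/-- a single strip swap decreases the number of reversals by at most 2. -/
theorem stripSwap_revCount_lower (n : ℕ) (π π' : List ℕ)
    (hperm : π.Perm (idPerm n)) (h : StripSwap π π') :
    revCount π' ≥ revCount π - 2 := by
  obtain ⟨A, X, B, Y, C, hπ, hπ', hX, hY, hrX, hrY, -, -, -, -⟩ := h
  obtain ⟨x1, hx1⟩ := Option.isSome_iff_exists.mp (List.isSome_head?.mpr hX)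
  obtain ⟨xk, hxk⟩ := Option.isSome_iff_exists.mp (List.getLast?_isSome.mpr hX)
  obtain ⟨y1, hy1⟩ := Option.isSome_iff_exists.mp (List.isSome_head?.mpr hY)
  obtain ⟨yl, hyl⟩ := Option.isSome_iff_exists.mp (List.getLast?_isSome.mpr hY)
  have hx : x1 ≤ xk := run_head_le_getLast X hrX x1 hx1 xk hxk
  have hy : y1 ≤ yl := run_head_le_getLast Y hrY y1 hy1 yl hyl
  have hnd : (A ++ (X ++ (B ++ (Y ++ C)))).Nodup := by
    have : π.Nodup := hperm.nodup_iff.mpr (List.nodup_range' (s := 1) (n := n))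
    simpa [hπ, List.append_assoc] using this
  have hx1m : x1 ∈ X := List.mem_of_mem_head? (by rw [hx1]; rfl)
  have hxkm : xk ∈ X := mem_of_getLast? hxk
  have hy1m : y1 ∈ Y := List.mem_of_mem_head? (by rw [hy1]; rfl)
  have hylm : yl ∈ Y := mem_of_getLast? hyl
  -- distinctness facts
  have hay1 : ∀ a ∈ A.getLast?, a ≠ y1 := by
    intro a ha
    exact ne_of_nodup_append hnd (mem_of_getLast? ha) (by simp [hy1m])
  have hxkc : ∀ c ∈ C.head?, xk ≠ c := by
    intro c hc
    exact ne_of_nodup_append (hnd.of_append_right) hxkm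
      (by simp [List.mem_of_mem_head? hc])
  have heqπ : π = A ++ (X ++ (B ++ (Y ++ C))) := by simp [hπ, List.append_assoc]
  have heqπ' : π' = A ++ (Y ++ (B ++ (X ++ C))) := by simp [hπ', List.append_assoc]
  by_cases hB : B = []
  · subst hB
    have hylx1 : yl ≠ x1 :=
      (ne_of_nodup_append (hnd.of_append_right)
        hx1m (by simp [hylm])).symm
    have e1 : revCount π = revCount A + revCount X + revCount Y + revCount C
        + Dd A.getLast? (some x1) + Dd (some xk) (some y1) + Dd (some yl) C.head? := by
      rw [heqπ]
      simp only [List.nil_append, revCount_append, List.head?_append,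
        hx1, hxk, hy1, hyl, Option.some_or]
      omega
    have e2 : revCount π' = revCount A + revCount Y + revCount X + revCount C
        + Dd A.getLast? (some y1) + Dd (some yl) (some x1) + Dd (some xk) C.head? := by
      rw [heqπ']
      simp only [List.nil_append, revCount_append, List.head?_append,
        hx1, hxk, hy1, hyl, Option.some_or]
      omega
    have := core2 A.getLast? C.head? x1 xk y1 yl hx hy hay1 hylx1 hxkc
    omega
  · obtain ⟨b1, hb1⟩ := Option.isSome_iff_exists.mp (List.isSome_head?.mpr hB)
    obtain ⟨bm, hbm⟩ := Option.isSome_iff_exists.mp (List.getLast?_isSome.mpr hB)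
    have hb1m : b1 ∈ B := List.mem_of_mem_head? (by rw [hb1]; rfl)
    have hbmm : bm ∈ B := mem_of_getLast? hbm
    have hylb1 : yl ≠ b1 :=
      (ne_of_nodup_append (hnd.of_append_right.of_append_right)
        hb1m (by simp [hylm])).symm
    have hbmx1 : bm ≠ x1 :=
      (ne_of_nodup_append (hnd.of_append_right)
        hx1m (by simp [hbmm])).symm
    have e1 : revCount π = revCount A + revCount X + revCount B + revCount Y + revCount C
        + Dd A.getLast? (some x1) + Dd (some xk) (some b1) + Dd (some bm) (some y1)
        + Dd (some yl) C.head? := by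
      rw [heqπ]
      simp only [revCount_append, List.head?_append,
        hx1, hxk, hy1, hyl, hb1, hbm, Option.some_or]
      omega
    have e2 : revCount π' = revCount A + revCount Y + revCount B + revCount X + revCount C
        + Dd A.getLast? (some y1) + Dd (some yl) (some b1) + Dd (some bm) (some x1)
        + Dd (some xk) C.head? := by
      rw [heqπ']
      simp only [revCount_append, List.head?_append,
        hx1, hxk, hy1, hyl, hb1, hbm, Option.some_or]
      omega
    have := core1 A.getLast? C.head? x1 xk b1 bm y1 yl hx hy hay1 hylb1 hbmx1 hxkc
    omega
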